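/- arXiv:1001.1679 — 6 statements merged into one kernel-verified Lean document; each statement's English description precedes it below -/
import Mathlib

section
/- (Theorem 2, Case 2 of the cascade Gaussian optimization.) Assume D₂·(sX + sZ) ≤ sX·sZ, sX < r·D₂, and r·D₂·(sX·sZ − D₂·sZ − D₂·sX) ≤ sX·sZ·(sX − D₂). Then, setting α := ( √( sZ·(sX − D₂) / (sX·(D₂ − sX/r)) ) − 1 )⁻¹, the number s* := sZ·sX·α² / (r·D₂ − sX) is the greatest element of the feasible set F, i.e. IsGreatest F s*. -/
/-- The feasible set of the cascade Gaussian optimization problem. -/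
def feasible (sX sZ D₂ r : ℝ) : Set ℝ :=
  {s : ℝ | 0 < s ∧ ∃ α : ℝ,
    (r - 1) * s ≥ (1 + α) ^ 2 * sX + α ^ 2 * sZ ∧
    s * (sX - D₂) ≤ α ^ 2 * (sX * D₂ + sZ * D₂ - sX * sZ) + 2 * α * sX * D₂ + D₂ * sX}

set_option maxHeartbeats 1600000 in
/-- Theorem 2, Case 2 of the cascade Gaussian optimization. -/
theorem cascade_gaussian_case2 (sX sZ D₂ r : ℝ)
    (hsX : 0 < sX) (hsZ : 0 < sZ) (hD₂ : 0 < D₂) (hr : 1 < r)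
    (h1 : D₂ * (sX + sZ) ≤ sX * sZ)
    (h2 : sX < r * D₂)
    (h3 : r * D₂ * (sX * sZ - D₂ * sZ - D₂ * sX) ≤ sX * sZ * (sX - D₂)) :
    IsGreatest (feasible sX sZ D₂ r)
      (sZ * sX * ((Real.sqrt (sZ * (sX - D₂) / (sX * (D₂ - sX / r))) - 1)⁻¹) ^ 2
        / (r * D₂ - sX)) := by
  have hr0 : (0:ℝ) < r := by linarith
  have hD2sX : D₂ < sX := by nlinarith [mul_pos hD₂ hsX, mul_pos hD₂ hsZ]
  have hden0 : (0:ℝ) < D₂ - sX / r := by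
    rw [sub_pos, div_lt_iff₀ hr0]; linarith
  have hden : (0:ℝ) < sX * (D₂ - sX / r) := mul_pos hsX hden0
  have hnum : (0:ℝ) < sZ * (sX - D₂) := mul_pos hsZ (by linarith)
  have hE1 : 1 < sZ * (sX - D₂) / (sX * (D₂ - sX / r)) := by
    rw [lt_div_iff₀ hden]
    have hx2r : 0 < sX ^ 2 / r := by positivity
    have hre : sX * (D₂ - sX / r) = sX * D₂ - sX ^ 2 / r := by ring
    rw [one_mul, hre]
    nlinarith [hx2r]
  set q := Real.sqrt (sZ * (sX - D₂) / (sX * (D₂ - sX / r))) with hqdef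
  have hq1 : 1 < q := by
    rw [hqdef, show (1:ℝ) = Real.sqrt 1 by simp]
    exact Real.sqrt_lt_sqrt (by norm_num) hE1
  have hq2 : q ^ 2 = sZ * (sX - D₂) / (sX * (D₂ - sX / r)) :=
    Real.sq_sqrt (by positivity)
  have hq2' : q ^ 2 * (sX * (D₂ - sX / r)) = sZ * (sX - D₂) := by
    rw [hq2, div_mul_cancel₀ _ (ne_of_gt hden)]
  have hq2r : q ^ 2 * (sX * (r * D₂ - sX)) = r * (sZ * (sX - D₂)) := by
    have hre : r * (D₂ - sX / r) = r * D₂ - sX := by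
      rw [mul_sub, mul_div_cancel₀ _ (ne_of_gt hr0)]
    calc q ^ 2 * (sX * (r * D₂ - sX)) = r * (q ^ 2 * (sX * (D₂ - sX / r))) := by
          rw [← hre]; ring
      _ = r * (sZ * (sX - D₂)) := by rw [hq2']
  set α := (q - 1)⁻¹ with hαdef
  have hqm1 : (0:ℝ) < q - 1 := by linarith
  have hαpos : 0 < α := by rw [hαdef]; positivity
  have hα : α * (q - 1) = 1 := inv_mul_cancel₀ (ne_of_gt hqm1)
  have h1a : 1 + α = α * q := by linear_combination -hα
  clear_value q α
  have hstarr : (1 + α) ^ 2 * (sX * (r * D₂ - sX)) = r * (α ^ 2 * (sZ * (sX - D₂))) := by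
    calc (1 + α) ^ 2 * (sX * (r * D₂ - sX))
        = α ^ 2 * (q ^ 2 * (sX * (r * D₂ - sX))) := by rw [h1a]; ring
      _ = r * (α ^ 2 * (sZ * (sX - D₂))) := by rw [hq2r]; ring
  have hrD : (0:ℝ) < r * D₂ - sX := by linarith
  set sstar := sZ * sX * α ^ 2 / (r * D₂ - sX) with hsdef
  have hsstarpos : 0 < sstar := by rw [hsdef]; positivity
  -- the two constraints hold with equality at (sstar, α)
  have heqA : (r - 1) * sstar = (1 + α) ^ 2 * sX + α ^ 2 * sZ := by
    rw [hsdef, ← mul_div_assoc, div_eq_iff (ne_of_gt hrD)]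
    linear_combination -hstarr
  have heqB : sstar * (sX - D₂)
      = α ^ 2 * (sX * D₂ + sZ * D₂ - sX * sZ) + 2 * α * sX * D₂ + D₂ * sX := by
    rw [hsdef, div_mul_eq_mul_div, div_eq_iff (ne_of_gt hrD)]
    linear_combination -D₂ * hstarr
  clear_value sstar
  constructor
  · exact ⟨hsstarpos, α, ge_of_eq heqA, le_of_eq heqB⟩
  · rintro s ⟨hs, β, hc1, hc2⟩
    set K := sX * sZ - D₂ * sX - D₂ * sZ with hKdef
    have hK : 0 ≤ K := by rw [hKdef]; linarith
    clear_value K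
    have hd : 0 < (sX + sZ) * α + sX := by positivity
    set lam := (sX * D₂ - K * α) / ((sX + sZ) * α + sX) with hlamdef
    have htang : lam * ((sX + sZ) * α + sX) = sX * D₂ - K * α := by
      rw [hlamdef, div_mul_cancel₀ _ (ne_of_gt hd)]
    clear_value lam
    -- lam ≥ 0, using h3
    have hkey3 : sZ * (sX - D₂) * (r * D₂ - sX) ≤ r * sX * D₂ ^ 2 := by linarith only [h3]
    have hsq : (sZ * (sX - D₂)) ^ 2 ≤ (sX * D₂ * q) ^ 2 := by
      have h4 : (sX * D₂ * q) ^ 2 * (sX * (r * D₂ - sX))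
          = sX ^ 2 * D₂ ^ 2 * (r * (sZ * (sX - D₂))) := by
        linear_combination (sX ^ 2 * D₂ ^ 2) * hq2r
      have hstep : (sZ * (sX - D₂)) ^ 2 * (sX * (r * D₂ - sX))
          ≤ (sX * D₂ * q) ^ 2 * (sX * (r * D₂ - sX)) := by
        rw [h4]
        linarith only [mul_le_mul_of_nonneg_left hkey3 (le_of_lt (mul_pos hnum hsX))]
      exact le_of_mul_le_mul_right hstep (mul_pos hsX hrD)
    have hq0 : 0 < q := by linarith
    have hqlb' : sZ * (sX - D₂) ≤ sX * D₂ * q :=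
      (pow_le_pow_iff_left₀ hnum.le (by positivity) two_ne_zero).mp hsq
    have hlam : 0 ≤ lam := by
      have h1a' : sX * D₂ * (α * q) = sX * D₂ * (1 + α) := by rw [← h1a]
      have hnn : 0 ≤ sX * D₂ - K * α := by
        rw [hKdef]
        linarith only [mul_le_mul_of_nonneg_right hqlb' (le_of_lt hαpos), h1a']
      rw [hlamdef]
      exact div_nonneg hnn hd.le
    -- coefficient positivity
    have hdiff : ((sX - D₂) * ((sX + sZ) * α + sX) - (r - 1) * (sX * D₂ - K * α)) * (q - 1)
        = q * (q - 1) * (sX * (r * D₂ - sX)) := by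
      rw [hKdef]
      linear_combination ((sX - D₂) * (sX + sZ)
        + (r - 1) * (sX * sZ - D₂ * sX - D₂ * sZ)) * hα - hq2r
    have hrhs : 0 < q * (q - 1) * (sX * (r * D₂ - sX)) := by positivity
    have hcoefpos : 0 < (sX - D₂) * ((sX + sZ) * α + sX) - (r - 1) * (sX * D₂ - K * α) :=
      pos_of_mul_pos_left (hdiff ▸ hrhs) hqm1.le
    have hcoef : 0 < sX - D₂ - lam * (r - 1) := by
      have e : (sX - D₂ - lam * (r - 1)) * ((sX + sZ) * α + sX)
          = (sX - D₂) * ((sX + sZ) * α + sX) - (r - 1) * (sX * D₂ - K * α) := by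
        linear_combination (-(r - 1)) * htang
      exact pos_of_mul_pos_left (e ▸ hcoefpos) hd.le
    -- quadratic maximization
    have hexpand : ((-K) * β ^ 2 + 2 * β * sX * D₂ + D₂ * sX
          - lam * ((1 + β) ^ 2 * sX + β ^ 2 * sZ))
        = ((-K) * α ^ 2 + 2 * α * sX * D₂ + D₂ * sX
          - lam * ((1 + α) ^ 2 * sX + α ^ 2 * sZ))
          - (K + lam * (sX + sZ)) * (β - α) ^ 2 := by
      linear_combination (-2 * (β - α)) * htang
    have hmax : ((-K) * β ^ 2 + 2 * β * sX * D₂ + D₂ * sX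
          - lam * ((1 + β) ^ 2 * sX + β ^ 2 * sZ))
        ≤ ((-K) * α ^ 2 + 2 * α * sX * D₂ + D₂ * sX
          - lam * ((1 + α) ^ 2 * sX + α ^ 2 * sZ)) := by
      rw [hexpand]
      have h5 : 0 ≤ (K + lam * (sX + sZ)) * (β - α) ^ 2 := by
        apply mul_nonneg _ (sq_nonneg _)
        have := mul_nonneg hlam (by linarith : (0:ℝ) ≤ sX + sZ)
        linarith
      linarith
    -- combine
    have hA : lam * ((1 + β) ^ 2 * sX + β ^ 2 * sZ) ≤ lam * ((r - 1) * s) :=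
      mul_le_mul_of_nonneg_left hc1 hlam
    have hB : s * (sX - D₂) ≤ (-K) * β ^ 2 + 2 * β * sX * D₂ + D₂ * sX := by
      rw [hKdef]; linarith only [hc2]
    have hBa : (-K) * α ^ 2 + 2 * α * sX * D₂ + D₂ * sX = sstar * (sX - D₂) := by
      rw [hKdef]; linear_combination -heqB
    have hAa : lam * ((1 + α) ^ 2 * sX + α ^ 2 * sZ) = lam * ((r - 1) * sstar) := by
      rw [← heqA]
    have hchain : (sX - D₂ - lam * (r - 1)) * s ≤ (sX - D₂ - lam * (r - 1)) * sstar := by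
      linarith only [hmax, hA, hB, hBa, hAa]
    exact le_of_mul_le_mul_left hchain hcoef
end

section
/- (Theorem 2, Case 3 of the cascade Gaussian optimization.) Assume D₂·(sX + sZ) ≥ sX·sZ, D₂ < sX, sX ≤ r·D₂, and r·(sX·D₂ + sZ·D₂ − sX·sZ) ≥ sX². Then the feasible set F is not bounded above: for every M : ℝ there exists s ∈ F with s > M. -/
/-- Theorem 2, Case 3 of the cascade Gaussian optimization: the feasible set is
unbounded above. -/
theorem cascade_gaussian_case3 (sX sZ D₂ r : ℝ)
    (hsX : 0 < sX) (hsZ : 0 < sZ) (hD₂ : 0 < D₂) (hr : 1 < r)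
    (h1 : D₂ * (sX + sZ) ≥ sX * sZ)
    (h2 : D₂ < sX)
    (h3 : sX ≤ r * D₂)
    (h4 : r * (sX * D₂ + sZ * D₂ - sX * sZ) ≥ sX ^ 2) :
    ∀ M : ℝ, ∃ s ∈ feasible sX sZ D₂ r, s > M := by
  intro M
  have hr1 : (0:ℝ) < r - 1 := by linarith
  set α : ℝ := max 0 (M * (r - 1) / sX) with hαdef
  have hα0 : 0 ≤ α := le_max_left _ _
  have hαge : M * (r - 1) / sX ≤ α := le_max_right _ _
  set s : ℝ := ((1 + α) ^ 2 * sX + α ^ 2 * sZ) / (r - 1) with hsdef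
  have hseq : (r - 1) * s = (1 + α) ^ 2 * sX + α ^ 2 * sZ := by
    rw [hsdef]; field_simp
  have hspos : 0 < s := by
    apply div_pos; · nlinarith [sq_nonneg α]
    · exact hr1
  have hcancel : M * (r - 1) / sX * sX = M * (r - 1) := div_mul_cancel₀ _ (ne_of_gt hsX)
  have hmul : M * (r - 1) ≤ α * sX := by
    calc M * (r - 1) = M * (r - 1) / sX * sX := hcancel.symm
    _ ≤ α * sX := mul_le_mul_of_nonneg_right hαge hsX.le
  refine ⟨s, ⟨hspos, α, hseq.ge, ?_⟩, ?_⟩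
  · have key : (r - 1) * (s * (sX - D₂)) ≤
        (r - 1) * (α ^ 2 * (sX * D₂ + sZ * D₂ - sX * sZ) + 2 * α * sX * D₂ + D₂ * sX) := by
      nlinarith [hseq, mul_nonneg (mul_nonneg (by nlinarith : (0:ℝ) ≤ r * (sX * D₂ + sZ * D₂ - sX * sZ) - sX ^ 2) hα0) hα0,
        mul_nonneg (mul_nonneg hsX.le (by linarith : (0:ℝ) ≤ r * D₂ - sX)) hα0,
        mul_nonneg hsX.le (by linarith : (0:ℝ) ≤ r * D₂ - sX)]
    exact le_of_mul_le_mul_left key hr1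
  · nlinarith [hseq, hmul, sq_nonneg α]
end

section
/- (Theorem 2, Case 4 of the cascade Gaussian optimization.) Assume D₂·(sX + sZ) ≥ sX·sZ, D₂ < sX, sX < r·D₂, and r·(sX·D₂ + sZ·D₂ − sX·sZ) < sX². Then, setting α := ( √( sZ·(sX − D₂) / (sX·(D₂ − sX/r)) ) − 1 )⁻¹, the number s* := sZ·sX·α² / (r·D₂ − sX) is the greatest element of the feasible set F, i.e. IsGreatest F s*. -/
set_option maxHeartbeats 1000000

/-- Theorem 2, Case 4 of the cascade Gaussian optimization. -/
theorem cascade_gaussian_case4 (sX sZ D₂ r : ℝ)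
    (hsX : 0 < sX) (hsZ : 0 < sZ) (hD₂ : 0 < D₂) (hr : 1 < r)
    (h1 : D₂ * (sX + sZ) ≥ sX * sZ)
    (h2 : D₂ < sX)
    (h3 : sX < r * D₂)
    (h4 : r * (sX * D₂ + sZ * D₂ - sX * sZ) < sX ^ 2) :
    IsGreatest (feasible sX sZ D₂ r)
      (sZ * sX * ((Real.sqrt (sZ * (sX - D₂) / (sX * (D₂ - sX / r))) - 1)⁻¹) ^ 2
        / (r * D₂ - sX)) := by
  have hr0 : (0:ℝ) < r := by linarith
  have hW : 0 < r * D₂ - sX := by linarith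
  have hG : 0 < sX - D₂ := by linarith
  have hd : 0 < D₂ - sX / r := by
    rw [sub_pos, div_lt_iff₀ hr0]
    linarith [mul_comm D₂ r]
  have hden : 0 < sX * (D₂ - sX / r) := mul_pos hsX hd
  set q : ℝ := sZ * (sX - D₂) / (sX * (D₂ - sX / r)) with hqdef
  have hq0 : 0 < q := div_pos (mul_pos hsZ hG) hden
  set u : ℝ := Real.sqrt q with hudef
  have hu2 : u ^ 2 = q := Real.sq_sqrt hq0.le
  have hu : sX * (r * D₂ - sX) * u ^ 2 = r * sZ * (sX - D₂) := by
    have h := hu2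
    rw [hqdef, eq_div_iff hden.ne'] at h
    have hrr : r * r⁻¹ = 1 := mul_inv_cancel₀ hr0.ne'
    linear_combination r * h + sX ^ 2 * u ^ 2 * hrr
  have hq1 : 1 < q := by
    rw [hqdef, lt_div_iff₀ hden]
    have e : r * (sX * (D₂ - sX / r)) = r * (sX * D₂) - sX ^ 2 := by
      field_simp
    nlinarith [e]
  have hu1 : 1 < u := by
    have h := Real.sqrt_lt_sqrt (by norm_num) hq1
    simpa using h
  have hum : 0 < u - 1 := by linarith
  clear_value q u
  clear hu2 hq0 hq1 hqdef hudef
  have hu0 : 0 < u := by linarith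
  have hν : (u - 1) * (u - 1)⁻¹ = 1 := mul_inv_cancel₀ hum.ne'
  have hK : 0 < (u - 1) ^ 2 * (r * D₂ - sX) := by positivity
  have hs0 : sZ * sX * ((u - 1)⁻¹) ^ 2 / (r * D₂ - sX)
      = sZ * sX / ((u - 1) ^ 2 * (r * D₂ - sX)) := by
    field_simp
  rw [hs0]
  have mA : ((1 + (u-1)⁻¹) ^ 2 * sX + ((u-1)⁻¹) ^ 2 * sZ) * ((u - 1) ^ 2 * (r * D₂ - sX))
      = (r - 1) * (sZ * sX) := by
    linear_combination hu +
      (sX * (r*D₂-sX) * (2*u + ((u-1)*(u-1)⁻¹ - 1)) +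
        sZ * (r*D₂-sX) * (2 + ((u-1)*(u-1)⁻¹ - 1))) * hν
  have mB : (((u-1)⁻¹) ^ 2 * (sX * D₂ + sZ * D₂ - sX * sZ) + 2 * (u-1)⁻¹ * sX * D₂ + D₂ * sX)
        * ((u - 1) ^ 2 * (r * D₂ - sX)) = sZ * sX * (sX - D₂) := by
    linear_combination D₂ * hu +
      ((r*D₂-sX) * ((sX*D₂+sZ*D₂-sX*sZ) * (2 + ((u-1)*(u-1)⁻¹ - 1)) + 2*sX*D₂*(u-1))) * hν
  constructor
  · refine ⟨div_pos (mul_pos hsZ hsX) hK, (u - 1)⁻¹, ?_, ?_⟩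
    · have e1 : (r - 1) * (sZ * sX / ((u - 1) ^ 2 * (r * D₂ - sX)))
          = (1 + (u-1)⁻¹) ^ 2 * sX + ((u-1)⁻¹) ^ 2 * sZ := by
        rw [← mul_div_assoc, div_eq_iff hK.ne', ← mA]
      rw [e1]
    · have e2 : (sZ * sX / ((u - 1) ^ 2 * (r * D₂ - sX))) * (sX - D₂)
          = ((u-1)⁻¹) ^ 2 * (sX * D₂ + sZ * D₂ - sX * sZ) + 2 * (u-1)⁻¹ * sX * D₂ + D₂ * sX := by
        rw [div_mul_eq_mul_div, div_eq_iff hK.ne', ← mB]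
      rw [e2]
  · rintro s ⟨hspos, α, hA, hB⟩
    have hDn : 0 < sX * u + sZ := by positivity
    have hN : 0 < sX * D₂ * u - sZ * (sX - D₂) := by
      have h1' : sZ * (sX - D₂) ≤ sX * D₂ := by nlinarith
      nlinarith [mul_pos (mul_pos hsX hD₂) hum]
    have hCd : 0 < sX * (r * D₂ - sX) * (u ^ 2 - u) := by
      have : 0 < u ^ 2 - u := by nlinarith
      positivity
    have step1 : s * (sX - D₂) * ((sX * u + sZ) * ((u - 1) ^ 2 * (r * D₂ - sX))) ≤
        (α ^ 2 * (sX * D₂ + sZ * D₂ - sX * sZ) + 2 * α * sX * D₂ + D₂ * sX)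
          * ((sX * u + sZ) * ((u - 1) ^ 2 * (r * D₂ - sX))) :=
      mul_le_mul_of_nonneg_right hB (mul_nonneg hDn.le hK.le)
    have step2 : ((1 + α) ^ 2 * sX + α ^ 2 * sZ)
          * ((sX * D₂ * u - sZ * (sX - D₂)) * ((u - 1) ^ 2 * (r * D₂ - sX)))
        ≤ (r - 1) * s * ((sX * D₂ * u - sZ * (sX - D₂)) * ((u - 1) ^ 2 * (r * D₂ - sX))) :=
      mul_le_mul_of_nonneg_right hA (mul_nonneg hN.le hK.le)
    have e2' : (sX - D₂) * (sX * u + sZ) - (r - 1) * (sX * D₂ * u - sZ * (sX - D₂))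
        = sX * (r * D₂ - sX) * (u ^ 2 - u) := by
      linear_combination -hu
    have e3 : (α ^ 2 * (sX * D₂ + sZ * D₂ - sX * sZ) + 2 * α * sX * D₂ + D₂ * sX)
          * ((sX * u + sZ) * ((u - 1) ^ 2 * (r * D₂ - sX)))
        - ((1 + α) ^ 2 * sX + α ^ 2 * sZ)
          * ((sX * D₂ * u - sZ * (sX - D₂)) * ((u - 1) ^ 2 * (r * D₂ - sX)))
        = sZ * sX * (sX * (r * D₂ - sX) * (u ^ 2 - u))
          - sX ^ 2 * sZ * (r * D₂ - sX) * (u - 1) * ((u - 1) * α - 1) ^ 2 := by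
      ring
    have sos : 0 ≤ sX ^ 2 * sZ * (r * D₂ - sX) * (u - 1) * ((u - 1) * α - 1) ^ 2 := by
      positivity
    have e1' : s * (sX - D₂) * ((sX * u + sZ) * ((u - 1) ^ 2 * (r * D₂ - sX)))
          - (r - 1) * s * ((sX * D₂ * u - sZ * (sX - D₂)) * ((u - 1) ^ 2 * (r * D₂ - sX)))
        = s * ((u - 1) ^ 2 * (r * D₂ - sX))
            * ((sX - D₂) * (sX * u + sZ) - (r - 1) * (sX * D₂ * u - sZ * (sX - D₂))) := by
      ring
    have e1'' : s * (sX - D₂) * ((sX * u + sZ) * ((u - 1) ^ 2 * (r * D₂ - sX)))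
          - (r - 1) * s * ((sX * D₂ * u - sZ * (sX - D₂)) * ((u - 1) ^ 2 * (r * D₂ - sX)))
        = s * ((u - 1) ^ 2 * (r * D₂ - sX)) * (sX * (r * D₂ - sX) * (u ^ 2 - u)) := by
      rw [← e2']; ring
    have h5 : s * ((u - 1) ^ 2 * (r * D₂ - sX)) * (sX * (r * D₂ - sX) * (u ^ 2 - u))
        ≤ sZ * sX * (sX * (r * D₂ - sX) * (u ^ 2 - u)) := by
      linarith [step1, step2, sos, e3, e1'']
    have h6 : s * ((u - 1) ^ 2 * (r * D₂ - sX)) ≤ sZ * sX := by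
      have := mul_le_mul_of_nonneg_right (le_refl (sX * (r * D₂ - sX) * (u ^ 2 - u))) (le_refl (0:ℝ))
      exact le_of_mul_le_mul_right h5 hCd
    rw [le_div_iff₀ hK]
    linarith
end

section
/- (Theorem 2, minimal rate R₁ in Case 1.) Assume D₂·(sX + sZ) < sX·sZ and r·D₂·(sX·sZ − D₂·sZ − D₂·sX) ≥ sX·sZ·(sX − D₂). Then the minimum of R₁(s) over s ∈ F exists and equals (1/2)·max(log(h / D₂), log(h / D₁)); that is, IsLeast {ρ : ℝ | ∃ s ∈ F, ρ = R₁(s)} ((1/2)·max(log(h / D₂), log(h / D₁))). -/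
/-- The conditional variance σ²_{X|Y}. -/
noncomputable def condVar (sX sZ : ℝ) : ℝ := sX * sZ / (sX + sZ)

/-- The conditional variance σ²_{X|W,Y} as a function of s = σ²_{Z₂}. -/
noncomputable def vWY (sX sZ s : ℝ) : ℝ := (1 / s + 1 / sX + 1 / sZ)⁻¹

/-- The rate R₁ as a function of s = σ²_{Z₂}. -/
noncomputable def rateR1 (sX sZ D₁ s : ℝ) : ℝ :=
  (1 / 2) * max (Real.log (condVar sX sZ / vWY sX sZ s))
    (max (Real.log (condVar sX sZ / D₁)) 0)

/-- Theorem 2, minimal rate R₁ in Case 1. -/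
theorem cascade_gaussian_rate_case1 (sX sZ D₂ r D₁ : ℝ)
    (hsX : 0 < sX) (hsZ : 0 < sZ) (hD₂ : 0 < D₂) (hr : 1 < r) (hD₁ : 0 < D₁)
    (h1 : D₂ * (sX + sZ) < sX * sZ)
    (h2 : r * D₂ * (sX * sZ - D₂ * sZ - D₂ * sX) ≥ sX * sZ * (sX - D₂)) :
    IsLeast {ρ : ℝ | ∃ s ∈ feasible sX sZ D₂ r, ρ = rateR1 sX sZ D₁ s}
      ((1 / 2) * max (Real.log (condVar sX sZ / D₂)) (Real.log (condVar sX sZ / D₁))) := by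
  have hE : 0 < sX * sZ - D₂ * sX - D₂ * sZ := by nlinarith
  have hsXD : 0 < sX - D₂ := by nlinarith [mul_pos hD₂ hsX]
  have hsum : 0 < sX + sZ := by linarith
  have hh : 0 < condVar sX sZ := div_pos (mul_pos hsX hsZ) hsum
  have hhD2 : D₂ ≤ condVar sX sZ := by
    rw [condVar, le_div_iff₀ hsum]; nlinarith
  have hA0 : 0 ≤ Real.log (condVar sX sZ / D₂) :=
    Real.log_nonneg (by rw [le_div_iff₀ hD₂]; nlinarith)
  constructor
  · -- membership: the minimizer s* = D₂ sX sZ / E with α* = sX D₂ / E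
    refine ⟨D₂ * sX * sZ / (sX * sZ - D₂ * sX - D₂ * sZ), ⟨div_pos (by positivity) hE,
      sX * D₂ / (sX * sZ - D₂ * sX - D₂ * sZ), ?_, ?_⟩, ?_⟩
    · -- rate constraint
      rw [ge_iff_le, ← sub_nonneg]
      have key : (r - 1) * (D₂ * sX * sZ / (sX * sZ - D₂ * sX - D₂ * sZ)) -
          ((1 + sX * D₂ / (sX * sZ - D₂ * sX - D₂ * sZ)) ^ 2 * sX +
            (sX * D₂ / (sX * sZ - D₂ * sX - D₂ * sZ)) ^ 2 * sZ) =
          (sX * sZ * (r * D₂ * (sX * sZ - D₂ * sZ - D₂ * sX) - sX * sZ * (sX - D₂))) /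
            (sX * sZ - D₂ * sX - D₂ * sZ) ^ 2 := by
        set E := sX * sZ - D₂ * sX - D₂ * sZ with hEdef
        have hE2 : E ≠ 0 := hE.ne'
        field_simp
        rw [hEdef]
        field_simp
        ring
      rw [key]
      apply div_nonneg _ (sq_nonneg _)
      have : 0 ≤ r * D₂ * (sX * sZ - D₂ * sZ - D₂ * sX) - sX * sZ * (sX - D₂) := by linarith
      positivity
    · -- distortion constraint (equality at α*)
      apply le_of_eq
      set E := sX * sZ - D₂ * sX - D₂ * sZ with hEdef
      have hE2 : E ≠ 0 := hE.ne'
      field_simp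
      rw [hEdef]
      field_simp
      ring
    · -- value of the rate at s*
      have h1s : 1 / (D₂ * sX * sZ / (sX * sZ - D₂ * sX - D₂ * sZ)) + 1 / sX + 1 / sZ
          = 1 / D₂ := by
        field_simp
        ring
      rw [rateR1, vWY, h1s, show (1/D₂)⁻¹ = D₂ by field_simp]
      congr 1
      rw [← max_assoc]
      exact (max_eq_left (le_trans hA0 (le_max_left _ _))).symm
  · -- lower bound
    rintro ρ ⟨s, ⟨hs0, α, _hc1, hc2⟩, rfl⟩
    have hsE : s * (sX * sZ - D₂ * sX - D₂ * sZ) ≤ D₂ * sX * sZ := by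
      nlinarith [mul_le_mul_of_nonneg_right hc2 hE.le,
        sq_nonneg ((sX * sZ - D₂ * sX - D₂ * sZ) * α - sX * D₂), mul_pos hsX hsZ]
    have hvform : vWY sX sZ s = s * sX * sZ / (s * sZ + s * sX + sX * sZ) := by
      rw [vWY]
      rw [inv_eq_iff_eq_inv]
      field_simp
      ring
    have hdenom : 0 < s * sZ + s * sX + sX * sZ := by positivity
    have hvpos : 0 < vWY sX sZ s := by
      rw [hvform]; positivity
    have hvle : vWY sX sZ s ≤ D₂ := by
      rw [hvform, div_le_iff₀ hdenom]
      nlinarith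
    have hAL : Real.log (condVar sX sZ / D₂) ≤
        Real.log (condVar sX sZ / vWY sX sZ s) := by
      apply Real.log_le_log (div_pos hh hD₂)
      gcongr
    rw [rateR1]
    apply mul_le_mul_of_nonneg_left _ (by norm_num : (0:ℝ) ≤ 1 / 2)
    apply max_le
    · exact hAL.trans (le_max_left _ _)
    · exact (le_max_left _ 0).trans (le_max_right _ _)
end

section
/- (Theorem 2, minimal rate R₁ in Case 3.) Assume D₂·(sX + sZ) ≥ sX·sZ, D₂ < sX, sX ≤ r·D₂, and r·(sX·D₂ + sZ·D₂ − sX·sZ) ≥ sX². Then the infimum of R₁(s) over s ∈ F equals (1/2)·max(log(h / D₁), 0); that is, sInf {ρ : ℝ | ∃ s ∈ F, ρ = R₁(s)} = (1/2)·max(log(h / D₁), 0). -/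
/-- The feasible set contains arbitrarily large elements under the Case 3 hypotheses. -/
lemma feasible_unbounded (sX sZ D₂ r : ℝ)
    (hsX : 0 < sX) (hsZ : 0 < sZ) (hD₂ : 0 < D₂) (hr : 1 < r)
    (h2 : D₂ < sX)
    (h3 : sX ≤ r * D₂)
    (h4 : r * (sX * D₂ + sZ * D₂ - sX * sZ) ≥ sX ^ 2) :
    ∀ M : ℝ, ∃ s ∈ feasible sX sZ D₂ r, M ≤ s := by
  intro M
  set A : ℝ := sX * D₂ + sZ * D₂ - sX * sZ with hA
  have hApos : 0 < A := by nlinarith [sq_nonneg sX]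
  set α : ℝ := max 0 (M * (sX - D₂) / (2 * sX * D₂)) with hα
  have hα0 : 0 ≤ α := le_max_left _ _
  have hαM : M * (sX - D₂) ≤ 2 * sX * D₂ * α := by
    have h2' : 0 < 2 * sX * D₂ := by positivity
    have := le_max_right 0 (M * (sX - D₂) / (2 * sX * D₂))
    calc M * (sX - D₂) = M * (sX - D₂) / (2 * sX * D₂) * (2 * sX * D₂) := by
          field_simp
      _ ≤ α * (2 * sX * D₂) := by
          apply mul_le_mul_of_nonneg_right this (le_of_lt h2')
      _ = 2 * sX * D₂ * α := by ring
  have hd : 0 < sX - D₂ := by linarith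
  set s : ℝ := (α ^ 2 * A + 2 * α * sX * D₂ + D₂ * sX) / (sX - D₂) with hs
  have hnum : 0 < α ^ 2 * A + 2 * α * sX * D₂ + D₂ * sX := by positivity
  have hspos : 0 < s := div_pos hnum hd
  refine ⟨s, ⟨hspos, α, ?_, ?_⟩, ?_⟩
  · -- (r-1) * s ≥ (1+α)^2 sX + α^2 sZ
    rw [ge_iff_le, hs, ← mul_div_assoc, le_div_iff₀ hd]
    nlinarith [mul_nonneg (mul_nonneg (sub_nonneg.2 (by linarith : sX ≤ r * D₂)) hα0) hsX.le,
      mul_nonneg (sub_nonneg.2 h4) (sq_nonneg α)]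
  · -- second constraint with equality
    rw [hs, div_mul_cancel₀ _ (ne_of_gt hd)]
  · -- M ≤ s
    rw [hs, le_div_iff₀ hd]
    nlinarith [mul_nonneg (mul_nonneg hα0 hα0) hApos.le]

/-- Theorem 2, minimal rate R₁ in Case 3. -/
theorem cascade_gaussian_rate_case3 (sX sZ D₂ r D₁ : ℝ)
    (hsX : 0 < sX) (hsZ : 0 < sZ) (hD₂ : 0 < D₂) (hr : 1 < r) (hD₁ : 0 < D₁)
    (h1 : D₂ * (sX + sZ) ≥ sX * sZ)
    (h2 : D₂ < sX)
    (h3 : sX ≤ r * D₂)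
    (h4 : r * (sX * D₂ + sZ * D₂ - sX * sZ) ≥ sX ^ 2) :
    sInf {ρ : ℝ | ∃ s ∈ feasible sX sZ D₂ r, ρ = rateR1 sX sZ D₁ s}
      = (1 / 2) * max (Real.log (condVar sX sZ / D₁)) 0 := by
  set S := {ρ : ℝ | ∃ s ∈ feasible sX sZ D₂ r, ρ = rateR1 sX sZ D₁ s} with hS
  set b0 : ℝ := max (Real.log (condVar sX sZ / D₁)) 0 with hb0
  have hh : 0 < condVar sX sZ := by
    unfold condVar; positivity
  have hunb := feasible_unbounded sX sZ D₂ r hsX hsZ hD₂ hr h2 h3 h4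
  have hne : S.Nonempty := by
    obtain ⟨s, hsF, _⟩ := hunb 1
    exact ⟨rateR1 sX sZ D₁ s, s, hsF, rfl⟩
  have hlb : ∀ ρ ∈ S, (1 / 2) * b0 ≤ ρ := by
    rintro ρ ⟨s, _, rfl⟩
    unfold rateR1
    have : b0 ≤ max (Real.log (condVar sX sZ / vWY sX sZ s)) b0 := le_max_right _ _
    linarith
  have hbdd : BddBelow S := ⟨(1 / 2) * b0, hlb⟩
  apply le_antisymm
  · rw [Real.sInf_le_iff hbdd hne]
    intro ε hε
    obtain ⟨s, hsF, hsM⟩ := hunb (condVar sX sZ / ε)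
    have hspos : 0 < s := hsF.1
    refine ⟨rateR1 sX sZ D₁ s, ⟨s, hsF, rfl⟩, ?_⟩
    have hratio : condVar sX sZ / vWY sX sZ s = 1 + condVar sX sZ / s := by
      unfold condVar vWY
      have h5 : 1 / s + 1 / sX + 1 / sZ ≠ 0 := by positivity
      field_simp
      ring
    have hhs : condVar sX sZ / s ≤ ε := by
      rw [div_le_iff₀ hspos]
      have : condVar sX sZ / ε ≤ s := hsM
      calc condVar sX sZ = condVar sX sZ / ε * ε := by field_simp
        _ ≤ s * ε := mul_le_mul_of_nonneg_right this hε.le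
        _ = ε * s := mul_comm _ _
    have hlog : Real.log (condVar sX sZ / vWY sX sZ s) ≤ ε := by
      rw [hratio]
      have h1' : 0 < 1 + condVar sX sZ / s := by positivity
      have := Real.log_le_sub_one_of_pos h1'
      linarith
    unfold rateR1
    have hmax : max (Real.log (condVar sX sZ / vWY sX sZ s)) b0 ≤ b0 + ε := by
      apply max_le
      · have : (0:ℝ) ≤ b0 := le_max_right _ _
        linarith
      · linarith
    have : (1/2 : ℝ) * max (Real.log (condVar sX sZ / vWY sX sZ s)) b0
        ≤ 1/2 * b0 + ε/2 := by linarith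
    linarith
  · exact le_csInf hne hlb
end

section
/- (Lemma 2.) Let n : ℕ and let S₁, S₂ ⊆ ℝⁿ be closed sets, each contained in the nonnegative orthant {x : ℝⁿ | 0 ≤ x}, and each upward closed. If Par(S₁) = Par(S₂), then S₁ = S₂. -/
/-- The Pareto frontier of a set `S` in `Fin n → ℝ` (componentwise order):
the set of Pareto-minimal points, i.e. points of `S` not strictly dominated by
any other point of `S`. -/
def paretoFrontier {n : ℕ} (S : Set (Fin n → ℝ)) : Set (Fin n → ℝ) :=
  {p | p ∈ S ∧ ¬ ∃ q ∈ S, q ≤ p ∧ q ≠ p}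

/-- Every point of a closed subset of the nonnegative orthant dominates some
Pareto-minimal point. -/
lemma exists_pareto_le {n : ℕ} (S : Set (Fin n → ℝ)) (hc : IsClosed S)
    (hn : S ⊆ {x : Fin n → ℝ | 0 ≤ x}) {p : Fin n → ℝ} (hp : p ∈ S) :
    ∃ q ∈ paretoFrontier S, q ≤ p := by
  set T : Set (Fin n → ℝ) := S ∩ Set.Icc 0 p with hT
  have hTc : IsCompact T := (isCompact_Icc (a := (0 : Fin n → ℝ)) (b := p)).inter_left hc
  have hTne : T.Nonempty := ⟨p, hp, hn hp, le_refl p⟩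
  have hcont : Continuous (fun x : Fin n → ℝ => ∑ i, x i) := by continuity
  obtain ⟨q, hqT, hmin⟩ := hTc.exists_isMinOn hTne hcont.continuousOn
  refine ⟨q, ⟨hqT.1, ?_⟩, hqT.2.2⟩
  rintro ⟨q', hq'S, hle, hne⟩
  have hq'T : q' ∈ T := ⟨hq'S, hn hq'S, hle.trans hqT.2.2⟩
  have hlt : ∑ i, q' i < ∑ i, q i := by
    obtain ⟨i, hi⟩ : ∃ i, q' i < q i := by
      by_contra h
      push_neg at h
      exact hne (le_antisymm hle fun i => h i)
    exact Finset.sum_lt_sum (fun i _ => hle i) ⟨i, Finset.mem_univ i, hi⟩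
  exact absurd (hmin hq'T) (not_le.mpr hlt)

/-- Lemma 2: two closed, upward-closed subsets of the nonnegative orthant with the
same Pareto frontier are identical. -/
theorem eq_of_paretoFrontier_eq (n : ℕ) (S₁ S₂ : Set (Fin n → ℝ))
    (hc₁ : IsClosed S₁) (hc₂ : IsClosed S₂)
    (hn₁ : S₁ ⊆ {x : Fin n → ℝ | 0 ≤ x}) (hn₂ : S₂ ⊆ {x : Fin n → ℝ | 0 ≤ x})
    (hu₁ : ∀ x ∈ S₁, ∀ z, x ≤ z → z ∈ S₁)
    (hu₂ : ∀ x ∈ S₂, ∀ z, x ≤ z → z ∈ S₂)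
    (hpar : paretoFrontier S₁ = paretoFrontier S₂) :
    S₁ = S₂ := by
  ext p
  constructor
  · intro hp
    obtain ⟨q, hq, hle⟩ := exists_pareto_le S₁ hc₁ hn₁ hp
    rw [hpar] at hq
    exact hu₂ q hq.1 p hle
  · intro hp
    obtain ⟨q, hq, hle⟩ := exists_pareto_le S₂ hc₂ hn₂ hp
    rw [← hpar] at hq
    exact hu₁ q hq.1 p hle
end
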